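/- With Λ_k as above defining a new probability measure P̄ by dP̄/dP = Λ_N on G_N, the random variables R_k := B + ε_k, k = 1,...,N, are, under P̄, mutually independent, independent of B, and each R_k has the law with density g (the same law as ε_k under P). -/

import Mathlib

open MeasureTheory ProbabilityTheory

open MeasureTheory ProbabilityTheory Finset
open scoped ENNReal

private lemma lintegral_pi_prod {ι : Type*} [Fintype ι] {α : ι → Type*}
    [∀ i, MeasurableSpace (α i)] (μ : ∀ i, Measure (α i)) [∀ i, SigmaFinite (μ i)]
    (f : ∀ i, α i → ℝ≥0∞) (hf : ∀ i, Measurable (f i)) (x₀ : ∀ i, α i) :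
    ∫⁻ x, ∏ i, f i (x i) ∂Measure.pi μ = ∏ i, ∫⁻ a, f i a ∂μ i := by
  classical
  have hF : Measurable fun y : ∀ i, α i => ∏ i, f i (y i) :=
    Finset.measurable_prod _ fun i _ => (hf i).comp (measurable_pi_apply i)
  have key : ∀ s : Finset ι, ∀ x : ∀ i, α i,
      (∫⋯∫⁻_s, (fun y => ∏ i, f i (y i)) ∂μ) x
        = (∏ i ∈ s, ∫⁻ a, f i a ∂μ i) * ∏ i ∈ sᶜ, f i (x i) := by
    intro s
    induction s using Finset.induction_on with
    | empty => intro x; simp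
    | @insert i t hit ih =>
      intro x
      rw [lmarginal_insert _ hF hit]
      have hcompl : i ∈ tᶜ := Finset.mem_compl.2 hit
      have step : ∀ a : α i,
          (∏ j ∈ tᶜ, f j (Function.update x i a j))
            = f i a * ∏ j ∈ (insert i t)ᶜ, f j (x j) := by
        intro a
        rw [← Finset.mul_prod_erase _ _ hcompl, Function.update_self,
          Finset.compl_insert]
        congr 1
        refine Finset.prod_congr rfl fun j hj => ?_
        rw [Function.update_of_ne (Finset.ne_of_mem_erase hj)]
      simp_rw [ih, step]
      rw [lintegral_const_mul _ ((hf i).mul_const _)]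
      rw [lintegral_mul_const _ (hf i)]
      rw [Finset.prod_insert hit]
      ring
  rw [lintegral_eq_lmarginal_univ (μ := μ) x₀, key, Finset.compl_univ, Finset.prod_empty, mul_one]

private lemma pi_map_eval {ι : Type*} [Fintype ι] {α : ι → Type*}
    [∀ i, MeasurableSpace (α i)] (ν : ∀ i, Measure (α i)) [∀ i, IsProbabilityMeasure (ν i)]
    (i : ι) : (Measure.pi ν).map (Function.eval i) = ν i := by
  classical
  ext s hs
  rw [Measure.map_apply (measurable_pi_apply i) hs, Set.eval_preimage, Measure.pi_pi]
  refine Finset.prod_eq_single_of_mem i (Finset.mem_univ i) (fun j _ hj => ?_) |>.trans ?_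
  · rw [Function.update_of_ne hj]; exact measure_univ
  · rw [Function.update_self]

private lemma map_pi_of_iIndep {Ω ι : Type*} [Fintype ι] [MeasurableSpace Ω]
    {P : Measure Ω} {α : ι → Type*} [∀ i, MeasurableSpace (α i)]
    {f : ∀ i, Ω → α i} (hm : ∀ i, Measurable (f i))
    [∀ i, SigmaFinite (P.map (f i))]
    (h : iIndepFun f P) :
    P.map (fun ω i => f i ω) = Measure.pi (fun i => P.map (f i)) := by
  refine (Measure.pi_eq (μ := fun i => P.map (f i)) fun A hA => ?_).symm
  have hφ : Measurable (fun ω i => f i ω) := measurable_pi_lambda _ hm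
  rw [Measure.map_apply hφ (MeasurableSet.univ_pi hA)]
  have hpre : (fun ω i => f i ω) ⁻¹' Set.pi Set.univ A = ⋂ i ∈ Finset.univ, f i ⁻¹' A i := by
    ext ω; simp [Set.mem_pi]
  rw [hpre, h.measure_inter_preimage_eq_mul Finset.univ (fun i _ => hA i)]
  exact Finset.prod_congr rfl fun i _ => (Measure.map_apply (hm i) (hA i)).symm

private lemma iIndep_of_map_pi {Ω ι : Type*} [Fintype ι] [MeasurableSpace Ω]
    {P : Measure Ω} {α : ι → Type*} [∀ i, MeasurableSpace (α i)]
    {f : ∀ i, Ω → α i} (hm : ∀ i, Measurable (f i))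
    (ν : ∀ i, Measure (α i)) [∀ i, IsProbabilityMeasure (ν i)]
    (h : P.map (fun ω i => f i ω) = Measure.pi ν) :
    iIndepFun f P := by
  classical
  have hφ : Measurable (fun ω i => f i ω) := measurable_pi_lambda _ hm
  have hsingle : ∀ (i : ι) (s : Set (α i)), MeasurableSet s → P (f i ⁻¹' s) = ν i s := by
    intro i s hs
    have : f i ⁻¹' s = (fun ω j => f j ω) ⁻¹' (Function.eval i ⁻¹' s) := rfl
    rw [this, ← Measure.map_apply hφ ((measurable_pi_apply i) hs), h,
      ← Measure.map_apply (measurable_pi_apply i) hs, pi_map_eval]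
  rw [iIndepFun_iff_measure_inter_preimage_eq_mul]
  intro S sets hsets
  set A : ∀ i, Set (α i) := fun i => if i ∈ S then sets i else Set.univ with hA
  have hAmeas : ∀ i, MeasurableSet (A i) := by
    intro i; by_cases hi : i ∈ S
    · simpa [hA, hi] using hsets i hi
    · simp [hA, hi]
  have hpre : (⋂ i ∈ S, f i ⁻¹' sets i) = (fun ω j => f j ω) ⁻¹' Set.pi Set.univ A := by
    ext ω
    simp only [Set.mem_iInter, Set.mem_preimage, Set.mem_pi, Set.mem_univ, true_implies, hA]
    constructor
    · intro hω i
      by_cases hi : i ∈ S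
      · simpa [hi] using hω i hi
      · simp [hi]
    · intro hω i hi
      have := hω i
      simpa [hi] using this
  rw [hpre, Measure.map_apply hφ (MeasurableSet.univ_pi hAmeas) |>.symm, h, Measure.pi_pi]
  have : ∀ i : ι, ν i (A i) = if i ∈ S then ν i (sets i) else 1 := by
    intro i; by_cases hi : i ∈ S <;> simp [hA, hi]
  simp_rw [this]
  rw [Finset.prod_ite_mem Finset.univ S fun i => ν i (sets i), Finset.univ_inter]
  exact Finset.prod_congr rfl fun i hi => (hsingle i (sets i) (hsets i hi)).symm

private lemma prod_map_optionElim {ι : Type*} [Fintype ι] {E : Type*} [MeasurableSpace E]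
    (μ0 : Measure E) (μ : ι → Measure E) [IsProbabilityMeasure μ0]
    [∀ i, IsProbabilityMeasure (μ i)] :
    ((Measure.pi μ).prod μ0).map
        (fun p (o : Option ι) => Option.elim o p.2 (fun k => p.1 k))
      = Measure.pi (fun o => Option.elim o μ0 μ) := by
  haveI : ∀ o : Option ι, IsProbabilityMeasure (Option.elim o μ0 μ) := by
    rintro (_ | i)
    · exact inferInstanceAs (IsProbabilityMeasure μ0)
    · exact inferInstanceAs (IsProbabilityMeasure (μ _))
  refine (Measure.pi_eq fun A hA => ?_).symm
  have hm : Measurable (fun (p : (ι → E) × E) (o : Option ι) =>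
      Option.elim o p.2 (fun k => p.1 k)) := by
    refine measurable_pi_lambda _ fun o => ?_
    cases o with
    | none => exact measurable_snd
    | some k => exact (measurable_pi_apply k).comp measurable_fst
  rw [Measure.map_apply hm (MeasurableSet.univ_pi hA)]
  have hpre : (fun (p : (ι → E) × E) (o : Option ι) => Option.elim o p.2 (fun k => p.1 k)) ⁻¹'
      Set.pi Set.univ A = (Set.pi Set.univ fun k => A (some k)) ×ˢ A none := by
    ext ⟨es, b⟩
    simp [Set.mem_pi, Option.forall, and_comm]
  rw [hpre, Measure.prod_prod, Measure.pi_pi, Fintype.prod_option]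
  exact (mul_comm _ _)

/-- Under `P̄ = Λ_N · P`, the returns `R_k = B + ε_k`, `k = 1,…,N`, are mutually
independent, independent of `B`, and each has the law with density `g`. -/
theorem stmt1
    {Ω : Type*} [MeasurableSpace Ω] (P : Measure Ω) [IsProbabilityMeasure P]
    (d N : ℕ)
    (g : (Fin d → ℝ) → ℝ) (hg_pos : ∀ x, 0 < g x) (hg_meas : Measurable g)
    (B : Ω → Fin d → ℝ) (ε : Fin N → Ω → Fin d → ℝ)
    (hB : Measurable B) (hε : ∀ i, Measurable (ε i))
    (hdist : ∀ i, Measure.map (ε i) P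
      = (volume : Measure (Fin d → ℝ)).withDensity (fun x => ENNReal.ofReal (g x)))
    (hindep : iIndepFun (β := fun _ : Option (Fin N) => Fin d → ℝ)
      (fun o => Option.elim o B ε) P)
    (ΛN : Ω → ℝ)
    (hΛN : ∀ ω, ΛN ω = ∏ ℓ : Fin N, g (B ω + ε ℓ ω) / g (ε ℓ ω))
    (Pbar : Measure Ω)
    (hPbar : Pbar = P.withDensity (fun ω => ENNReal.ofReal (ΛN ω))) :
    iIndepFun (β := fun _ : Option (Fin N) => Fin d → ℝ)
      (fun o => Option.elim o B (fun k ω => B ω + ε k ω)) Pbar ∧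
    ∀ k : Fin N, Measure.map (fun ω => B ω + ε k ω) Pbar
      = (volume : Measure (Fin d → ℝ)).withDensity (fun x => ENNReal.ofReal (g x)) := by
  classical
  rcases Nat.eq_zero_or_pos N with hN0 | hNpos
  · subst hN0
    have hP : Pbar = P := by
      rw [hPbar]
      have : (fun ω => ENNReal.ofReal (ΛN ω)) = 1 := by
        funext ω; simp [hΛN ω]
      rw [this, withDensity_one]
    constructor
    · have hfam : (fun o : Option (Fin 0) => Option.elim o B (fun k ω => B ω + ε k ω))
          = fun o => Option.elim o B ε := by
        funext o; cases o with
        | none => rfl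
        | some k => exact k.elim0
      rw [hP, hfam]; exact hindep
    · intro k; exact k.elim0
  · obtain ⟨i0⟩ : Nonempty (Fin N) := ⟨⟨0, hNpos⟩⟩
    set ν : Measure (Fin d → ℝ) := volume.withDensity fun x => ENNReal.ofReal (g x) with hνdef
    haveI hνP : IsProbabilityMeasure ν := by
      rw [show ν = Measure.map (ε i0) P from (hdist i0).symm]
      exact Measure.isProbabilityMeasure_map (hε i0).aemeasurable
    haveI : IsProbabilityMeasure (P.map B) := Measure.isProbabilityMeasure_map hB.aemeasurable
    set μf : Option (Fin N) → Measure (Fin d → ℝ) :=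
      fun o => Option.elim o (P.map B) (fun _ => ν) with hμfdef
    haveI hμfP : ∀ o : Option (Fin N), IsProbabilityMeasure (μf o) := by
      rintro (_ | k)
      · exact inferInstanceAs (IsProbabilityMeasure (P.map B))
      · exact inferInstanceAs (IsProbabilityMeasure ν)
    have hf : ∀ o : Option (Fin N), Measurable (Option.elim o B ε) := by
      rintro (_ | k); exacts [hB, hε k]
    haveI : ∀ o : Option (Fin N), IsProbabilityMeasure (P.map (Option.elim o B ε)) := by
      rintro (_ | k)
      · exact Measure.isProbabilityMeasure_map hB.aemeasurable
      · exact Measure.isProbabilityMeasure_map (hε k).aemeasurable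
    set φ : Ω → Option (Fin N) → Fin d → ℝ := fun ω o => Option.elim o B ε ω with hφdef
    have hφ_meas : Measurable φ := measurable_pi_lambda _ hf
    have hjoint : P.map φ = Measure.pi μf := by
      refine (map_pi_of_iIndep hf hindep).trans ?_
      congr 1
      funext o
      cases o with
      | none => rfl
      | some k => exact hdist k
    set D : (Option (Fin N) → Fin d → ℝ) → ℝ≥0∞ :=
      fun x => ∏ k : Fin N, ENNReal.ofReal (g (x none + x (some k)) / g (x (some k)))
      with hDdef
    have hD_meas : Measurable D := by
      refine Finset.measurable_prod _ fun k _ => ?_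
      exact ((hg_meas.comp ((measurable_pi_apply none).add
        (measurable_pi_apply (some k)))).div
        (hg_meas.comp (measurable_pi_apply (some k)))).ennreal_ofReal
    have hPbarD : Pbar = P.withDensity (fun ω => D (φ ω)) := by
      rw [hPbar]
      congr 1
      funext ω
      rw [hΛN ω, ENNReal.ofReal_prod_of_nonneg
        (fun k _ => (div_pos (hg_pos _) (hg_pos _)).le)]
      rfl
    set T : (Option (Fin N) → Fin d → ℝ) → Option (Fin N) → Fin d → ℝ :=
      fun x o => Option.elim o (x none) (fun k => x none + x (some k)) with hTdef
    have hT_meas : Measurable T := by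
      refine measurable_pi_lambda _ fun o => ?_
      cases o with
      | none => exact measurable_pi_apply none
      | some k => exact (measurable_pi_apply none).add (measurable_pi_apply (some k))
    set ψ : Ω → Option (Fin N) → Fin d → ℝ := fun ω => T (φ ω) with hψdef
    have hψ_meas : Measurable ψ := hT_meas.comp hφ_meas
    have hmapψ : Pbar.map ψ = ((Measure.pi μf).withDensity D).map T := by
      rw [hPbarD, ← hjoint]
      ext s hs
      rw [Measure.map_apply hψ_meas hs, Measure.map_apply hT_meas hs,
        withDensity_apply _ (hψ_meas hs), withDensity_apply _ (hT_meas hs),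
        setLIntegral_map (hT_meas hs) hD_meas hφ_meas]
      rfl
    set m : (Fin N → Fin d → ℝ) × (Fin d → ℝ) → Option (Fin N) → Fin d → ℝ :=
      fun p o => Option.elim o p.2 (fun k => p.1 k) with hmdef
    have hm_meas : Measurable m := by
      refine measurable_pi_lambda _ fun o => ?_
      cases o with
      | none => exact measurable_snd
      | some k => exact (measurable_pi_apply k).comp measurable_fst
    have hpiν : Measure.pi μf = ((Measure.pi fun _ : Fin N => ν).prod (P.map B)).map m :=
      (prod_map_optionElim (P.map B) (fun _ => ν)).symm
    have hM : ((Measure.pi μf).withDensity D).map T = Measure.pi μf := by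
      refine (Measure.pi_eq fun A hA => ?_).symm
      have hpiA : MeasurableSet (Set.pi Set.univ A) := MeasurableSet.univ_pi hA
      rw [Measure.map_apply hT_meas hpiA, withDensity_apply _ (hT_meas hpiA),
        ← lintegral_indicator (hT_meas hpiA) D, hpiν,
        lintegral_map (hD_meas.indicator (hT_meas hpiA)) hm_meas,
        lintegral_prod_symm _ (show Measurable fun p : (Fin N → Fin d → ℝ) × (Fin d → ℝ) =>
          (T ⁻¹' Set.pi Set.univ A).indicator D (m p) from
          (hD_meas.indicator (hT_meas hpiA)).comp hm_meas).aemeasurable]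
      have hptwise : ∀ (b : Fin d → ℝ) (es : Fin N → Fin d → ℝ),
          (T ⁻¹' Set.pi Set.univ A).indicator D (m (es, b))
            = (A none).indicator 1 b
              * ∏ k : Fin N, ((A (some k)).indicator 1 (b + es k)
                  * ENNReal.ofReal (g (b + es k) / g (es k))) := by
        intro b es
        have hmem : m (es, b) ∈ T ⁻¹' Set.pi Set.univ A
            ↔ (b ∈ A none ∧ ∀ k, b + es k ∈ A (some k)) := by
          simp [hTdef, hmdef, Set.mem_pi, Option.forall]
        by_cases hb : b ∈ A none
        · by_cases hall : ∀ k : Fin N, b + es k ∈ A (some k)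
          · rw [Set.indicator_of_mem (hmem.2 ⟨hb, hall⟩), Set.indicator_of_mem hb,
              Pi.one_apply, one_mul]
            refine Finset.prod_congr rfl fun k _ => ?_
            rw [Set.indicator_of_mem (hall k), Pi.one_apply, one_mul]
            rfl
          · push_neg at hall
            obtain ⟨k0, hk0⟩ := hall
            rw [Set.indicator_of_notMem (fun h => hk0 ((hmem.1 h).2 k0)),
              Finset.prod_eq_zero (Finset.mem_univ k0)
                (by rw [Set.indicator_of_notMem hk0, zero_mul]), mul_zero]
        · rw [Set.indicator_of_notMem (fun h => hb (hmem.1 h).1),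
            Set.indicator_of_notMem hb, zero_mul]
      simp_rw [hptwise]
      have hFmeas : ∀ (b : Fin d → ℝ) (k : Fin N),
          Measurable fun a : Fin d → ℝ =>
            (A (some k)).indicator 1 (b + a) * ENNReal.ofReal (g (b + a) / g a) := by
        intro b k
        exact ((measurable_const.indicator (hA (some k))).comp
            (measurable_const.add measurable_id)).mul
          ((hg_meas.comp (measurable_const.add measurable_id)).div hg_meas).ennreal_ofReal
      have hfac : ∀ (b : Fin d → ℝ) (k : Fin N),
          ∫⁻ a, (A (some k)).indicator 1 (b + a)
              * ENNReal.ofReal (g (b + a) / g a) ∂ν = ν (A (some k)) := by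
        intro b k
        rw [hνdef, lintegral_withDensity_eq_lintegral_mul _ hg_meas.ennreal_ofReal
          (hFmeas b k)]
        have heq : ∀ a : Fin d → ℝ,
            ENNReal.ofReal (g a)
                * ((A (some k)).indicator 1 (b + a) * ENNReal.ofReal (g (b + a) / g a))
              = (A (some k)).indicator (fun r' => ENNReal.ofReal (g r')) (b + a) := by
          intro a
          have h2 : g a * (g (b + a) / g a) = g (b + a) := by
            have hga : g a ≠ 0 := (hg_pos a).ne'
            field_simp
          by_cases hmem2 : b + a ∈ A (some k)
          · rw [Set.indicator_of_mem hmem2, Set.indicator_of_mem hmem2, Pi.one_apply,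
              one_mul, ← ENNReal.ofReal_mul (hg_pos a).le, h2]
          · rw [Set.indicator_of_notMem hmem2, Set.indicator_of_notMem hmem2,
              zero_mul, mul_zero]
        simp_rw [Pi.mul_apply, heq]
        rw [lintegral_add_left_eq_self
          ((A (some k)).indicator fun r' => ENNReal.ofReal (g r')) b,
          lintegral_indicator (hA (some k)) _, ← withDensity_apply _ (hA (some k))]
      have hinner : ∀ b : Fin d → ℝ,
          (∫⁻ es, (A none).indicator 1 b
              * ∏ k : Fin N, ((A (some k)).indicator 1 (b + es k)
                  * ENNReal.ofReal (g (b + es k) / g (es k)))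
            ∂(Measure.pi fun _ : Fin N => ν))
          = (A none).indicator 1 b * ∏ k : Fin N, ν (A (some k)) := by
        intro b
        rw [lintegral_const_mul _ (Finset.measurable_prod _ fun k _ =>
          show Measurable fun es : Fin N → Fin d → ℝ =>
              (A (some k)).indicator 1 (b + es k) * ENNReal.ofReal (g (b + es k) / g (es k))
            from (hFmeas b k).comp (measurable_pi_apply k))]
        congr 1
        refine (lintegral_pi_prod (fun _ => ν)
          (fun k a => (A (some k)).indicator 1 (b + a) * ENNReal.ofReal (g (b + a) / g a))
          (hFmeas b) 0).trans ?_
        exact Finset.prod_congr rfl fun k _ => hfac b k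
      simp_rw [hinner]
      rw [lintegral_mul_const _ (measurable_one.indicator (hA none)),
        lintegral_indicator_one (hA none), Fintype.prod_option]
      rfl
    have hlaw : Pbar.map ψ = Measure.pi μf := hmapψ.trans hM
    haveI hPbarProb : IsProbabilityMeasure Pbar := by
      constructor
      have huniv : Pbar Set.univ = Pbar.map ψ Set.univ := by
        rw [Measure.map_apply hψ_meas MeasurableSet.univ, Set.preimage_univ]
      rw [huniv, hlaw]
      exact measure_univ
    constructor
    · have hfR : ∀ o : Option (Fin N),
          Measurable (Option.elim o B (fun k ω => B ω + ε k ω)) := by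
        rintro (_ | k); exacts [hB, hB.add (hε k)]
      have hlaw' : Pbar.map
          (fun ω (o : Option (Fin N)) => Option.elim o B (fun k ω => B ω + ε k ω) ω)
          = Measure.pi μf := by
        have : (fun ω (o : Option (Fin N)) =>
            Option.elim o B (fun k ω => B ω + ε k ω) ω) = ψ := by
          funext ω o; cases o <;> rfl
        rw [this]; exact hlaw
      exact iIndep_of_map_pi hfR μf hlaw'
    · intro k
      have h1 : (fun ω => B ω + ε k ω) = (Function.eval (some k : Option (Fin N))) ∘ ψ := by
        funext ω; rfl
      rw [h1, ← Measure.map_map (measurable_pi_apply (some k)) hψ_meas, hlaw,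
        pi_map_eval μf (some k)]
      rfl
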